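/- Capacity of tensor products is submultiplicative in the normalized sense: if T_1 is a completely positive operator on d_1 × d_1 matrices and T_2 on d_2 × d_2 matrices, then cap(T_1 ⊗ T_2)^{1/(d_1 d_2)} ≤ cap(T_1)^{1/d_1} · cap(T_2)^{1/d_2}. -/

import Mathlib

open Matrix
open scoped Kronecker ComplexOrder

/-- The capacity of the completely positive operator `T(X) = ∑ i, A i * X * (A i)ᴴ`. -/
noncomputable def cap {ι N : Type*} [Fintype ι] [Fintype N] [DecidableEq N]
    (A : ι → Matrix N N ℂ) : ℝ :=
  sInf { r : ℝ | ∃ X : Matrix N N ℂ,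
    X.PosDef ∧ X.det = 1 ∧ ((∑ i, A i * X * (A i)ᴴ).det).re = r }

private lemma kron_conjT {l m n p : Type*} (M : Matrix l m ℂ) (N : Matrix n p ℂ) :
    (M ⊗ₖ N)ᴴ = Mᴴ ⊗ₖ Nᴴ := by
  ext ⟨i, j⟩ ⟨k, l'⟩
  simp [conjTranspose_apply, kroneckerMap_apply, star_mul', mul_comm]

private lemma sum_kron {ι κ l m n p : Type*} [Fintype ι] [Fintype κ]
    (f : ι → Matrix l m ℂ) (g : κ → Matrix n p ℂ) :
    ∑ x : ι × κ, f x.1 ⊗ₖ g x.2 = (∑ i, f i) ⊗ₖ (∑ j, g j) := by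
  ext ⟨i, j⟩ ⟨k, l'⟩
  simp only [kroneckerMap_apply, Matrix.sum_apply, Fintype.sum_prod_type, Finset.sum_mul,
    Finset.mul_sum]
  rw [Finset.sum_comm]

private lemma psd_sum {N ι : Type*} [Fintype N] [DecidableEq N] [Fintype ι]
    (A : ι → Matrix N N ℂ) {X : Matrix N N ℂ} (hX : X.PosSemidef) :
    (∑ i, A i * X * (A i)ᴴ).PosSemidef := by
  classical
  refine Finset.sum_induction _ _ (fun a b ha hb => ha.add hb) PosSemidef.zero ?_
  exact fun i _ => hX.mul_mul_conjTranspose_same (A i)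

private lemma psd_det {N : Type*} [Fintype N] [DecidableEq N] {M : Matrix N N ℂ}
    (hM : M.PosSemidef) : M.det = (M.det.re : ℂ) ∧ 0 ≤ M.det.re := by
  have h : M.det = ((∏ i, hM.1.eigenvalues i : ℝ) : ℂ) := by
    rw [hM.1.det_eq_prod_eigenvalues]; norm_cast
  have hnn : 0 ≤ ∏ i, hM.1.eigenvalues i :=
    Finset.prod_nonneg fun i _ => hM.eigenvalues_nonneg i
  constructor
  · rw [h, Complex.ofReal_re]
  · rw [h, Complex.ofReal_re]; exact hnn

private lemma posSemidef_iff_eq_transpose_mul_self {n : Type*} [Fintype n] [DecidableEq n]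
    {A : Matrix n n ℂ} : A.PosSemidef ↔ ∃ B : Matrix n n ℂ, A = Bᴴ * B := by
  open scoped MatrixOrder in
  constructor
  · intro h
    obtain ⟨B, hB⟩ := CStarAlgebra.nonneg_iff_eq_star_mul_self.mp h.nonneg
    exact ⟨B, hB⟩
  · rintro ⟨B, rfl⟩
    exact posSemidef_conjTranspose_mul_self B

private lemma posDef_of_psd_det {N : Type*} [Fintype N] [DecidableEq N] {M : Matrix N N ℂ}
    (hM : M.PosSemidef) (hd : M.det ≠ 0) : M.PosDef := by
  obtain ⟨B, rfl⟩ := posSemidef_iff_eq_transpose_mul_self.mp hM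
  have hB : IsUnit B := by
    rw [Matrix.isUnit_iff_isUnit_det]
    refine Ne.isUnit fun h => hd ?_
    rw [det_mul, h, mul_zero]
  refine posDef_iff_dotProduct_mulVec.mpr ⟨hM.1, fun x hx => ?_⟩
  rw [← mulVec_mulVec, dotProduct_mulVec, vecMul_conjTranspose, star_star,
    dotProduct_star_self_pos_iff]
  intro h
  exact hx (Matrix.mulVec_injective_iff_isUnit.mpr hB (by simpa using h))

private lemma capSet_nonneg {ι N : Type*} [Fintype ι] [Fintype N] [DecidableEq N]
    (A : ι → Matrix N N ℂ) :
    ∀ r ∈ { r : ℝ | ∃ X : Matrix N N ℂ,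
      X.PosDef ∧ X.det = 1 ∧ ((∑ i, A i * X * (A i)ᴴ).det).re = r }, 0 ≤ r := by
  rintro r ⟨X, hX, -, rfl⟩
  exact (psd_det (psd_sum A hX.posSemidef)).2

private lemma capSet_nonempty {ι N : Type*} [Fintype ι] [Fintype N] [DecidableEq N]
    (A : ι → Matrix N N ℂ) :
    { r : ℝ | ∃ X : Matrix N N ℂ,
      X.PosDef ∧ X.det = 1 ∧ ((∑ i, A i * X * (A i)ᴴ).det).re = r }.Nonempty :=
  ⟨_, 1, Matrix.PosDef.one, det_one, rfl⟩

private lemma cap_nonneg {ι N : Type*} [Fintype ι] [Fintype N] [DecidableEq N]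
    (A : ι → Matrix N N ℂ) : 0 ≤ cap A :=
  le_csInf (capSet_nonempty A) (capSet_nonneg A)

theorem cap_tensor_submultiplicative (d₁ d₂ m₁ m₂ : ℕ) (hd₁ : 0 < d₁) (hd₂ : 0 < d₂)
    (A : Fin m₁ → Matrix (Fin d₁) (Fin d₁) ℂ)
    (B : Fin m₂ → Matrix (Fin d₂) (Fin d₂) ℂ) :
    cap (fun p : Fin m₁ × Fin m₂ => A p.1 ⊗ₖ B p.2) ^ ((1 : ℝ) / (d₁ * d₂)) ≤
      cap A ^ ((1 : ℝ) / d₁) * cap B ^ ((1 : ℝ) / d₂) := by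
  set SA := { r : ℝ | ∃ X : Matrix (Fin d₁) (Fin d₁) ℂ,
    X.PosDef ∧ X.det = 1 ∧ ((∑ i, A i * X * (A i)ᴴ).det).re = r } with hSA
  set SB := { r : ℝ | ∃ Y : Matrix (Fin d₂) (Fin d₂) ℂ,
    Y.PosDef ∧ Y.det = 1 ∧ ((∑ i, B i * Y * (B i)ᴴ).det).re = r } with hSB
  set K := fun p : Fin m₁ × Fin m₂ => A p.1 ⊗ₖ B p.2 with hK
  -- key pointwise bound
  have key : ∀ v₁ ∈ SA, ∀ v₂ ∈ SB, cap K ≤ v₁ ^ d₂ * v₂ ^ d₁ := by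
    rintro v₁ ⟨X, hX, hXdet, rfl⟩ v₂ ⟨Y, hY, hYdet, rfl⟩
    have hZpsd : (X ⊗ₖ Y).PosSemidef := by
      obtain ⟨P, hP⟩ := posSemidef_iff_eq_transpose_mul_self.mp hX.posSemidef
      obtain ⟨Q, hQ⟩ := posSemidef_iff_eq_transpose_mul_self.mp hY.posSemidef
      rw [hP, hQ, mul_kronecker_mul, ← kron_conjT]
      exact posSemidef_conjTranspose_mul_self _
    have hZdet : (X ⊗ₖ Y).det = 1 := by
      rw [det_kronecker, hXdet, hYdet]; simp
    have hZ : (X ⊗ₖ Y).PosDef :=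
      posDef_of_psd_det hZpsd (by rw [hZdet]; exact one_ne_zero)
    have hsum : (∑ p : Fin m₁ × Fin m₂, K p * (X ⊗ₖ Y) * (K p)ᴴ) =
        (∑ i, A i * X * (A i)ᴴ) ⊗ₖ (∑ j, B j * Y * (B j)ᴴ) := by
      rw [← sum_kron]
      refine Finset.sum_congr rfl fun p _ => ?_
      rw [hK, kron_conjT, mul_kronecker_mul, mul_kronecker_mul]
    have hS₁ := psd_det (psd_sum A hX.posSemidef)
    have hS₂ := psd_det (psd_sum B hY.posSemidef)
    have hmem : ((∑ i, A i * X * (A i)ᴴ).det).re ^ d₂ *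
        ((∑ j, B j * Y * (B j)ᴴ).det).re ^ d₁ ∈
        { r : ℝ | ∃ Z : Matrix (Fin d₁ × Fin d₂) (Fin d₁ × Fin d₂) ℂ,
          Z.PosDef ∧ Z.det = 1 ∧ ((∑ p, K p * Z * (K p)ᴴ).det).re = r } := by
      refine ⟨X ⊗ₖ Y, hZ, hZdet, ?_⟩
      rw [hsum, det_kronecker, Fintype.card_fin, Fintype.card_fin, hS₁.1, hS₂.1,
        ← Complex.ofReal_pow, ← Complex.ofReal_pow, ← Complex.ofReal_mul, Complex.ofReal_re]
      simp
    refine csInf_le ⟨0, fun r hr => ?_⟩ hmem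
    obtain ⟨Z, hZ', -, rfl⟩ := hr
    exact (psd_det (psd_sum K hZ'.posSemidef)).2
  -- bound with infima
  have hA0 : 0 ≤ cap A := cap_nonneg A
  have hB0 : 0 ≤ cap B := cap_nonneg B
  have hK0 : 0 ≤ cap K := cap_nonneg K
  have hbigkey : cap K ≤ cap A ^ d₂ * cap B ^ d₁ := by
    have hcont : Filter.Tendsto
        (fun ε : ℝ => (cap A + ε) ^ d₂ * (cap B + ε) ^ d₁) (nhdsWithin 0 (Set.Ioi 0))
        (nhds ((cap A + 0) ^ d₂ * (cap B + 0) ^ d₁)) := by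
      apply Filter.Tendsto.mono_left _ nhdsWithin_le_nhds
      exact (((continuous_const.add continuous_id).pow d₂).mul
        ((continuous_const.add continuous_id).pow d₁)).tendsto 0
    simp only [add_zero] at hcont
    refine ge_of_tendsto hcont ?_
    filter_upwards [self_mem_nhdsWithin] with ε (hε : 0 < ε)
    have h₁ : ∃ v₁ ∈ SA, v₁ < cap A + ε := by
      have := (csInf_lt_iff ⟨0, fun r hr => capSet_nonneg A r hr⟩ (capSet_nonempty A)).mp
        (show sInf SA < cap A + ε by rw [cap]; exact lt_add_of_pos_right _ hε)
      exact this
    have h₂ : ∃ v₂ ∈ SB, v₂ < cap B + ε := by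
      have := (csInf_lt_iff ⟨0, fun r hr => capSet_nonneg B r hr⟩ (capSet_nonempty B)).mp
        (show sInf SB < cap B + ε by rw [cap]; exact lt_add_of_pos_right _ hε)
      exact this
    obtain ⟨v₁, hv₁, hv₁'⟩ := h₁
    obtain ⟨v₂, hv₂, hv₂'⟩ := h₂
    have hv₁0 : 0 ≤ v₁ := capSet_nonneg A v₁ hv₁
    have hv₂0 : 0 ≤ v₂ := capSet_nonneg B v₂ hv₂
    calc cap K ≤ v₁ ^ d₂ * v₂ ^ d₁ := key v₁ hv₁ v₂ hv₂
      _ ≤ (cap A + ε) ^ d₂ * (cap B + ε) ^ d₁ := by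
          exact mul_le_mul (pow_le_pow_left₀ hv₁0 hv₁'.le d₂)
            (pow_le_pow_left₀ hv₂0 hv₂'.le d₁) (pow_nonneg hv₂0 d₁)
            (pow_nonneg (by linarith) d₂)
  -- rpow arithmetic
  have hd₁' : (d₁ : ℝ) ≠ 0 := Nat.cast_ne_zero.mpr hd₁.ne'
  have hd₂' : (d₂ : ℝ) ≠ 0 := Nat.cast_ne_zero.mpr hd₂.ne'
  have hstep : cap K ^ ((1 : ℝ) / (d₁ * d₂)) ≤
      (cap A ^ d₂ * cap B ^ d₁) ^ ((1 : ℝ) / (d₁ * d₂)) :=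
    Real.rpow_le_rpow hK0 hbigkey (by positivity)
  refine hstep.trans_eq ?_
  rw [Real.mul_rpow (pow_nonneg hA0 d₂) (pow_nonneg hB0 d₁),
    ← Real.rpow_natCast (cap A) d₂, ← Real.rpow_natCast (cap B) d₁,
    ← Real.rpow_mul hA0, ← Real.rpow_mul hB0]
  rw [show (d₂ : ℝ) * ((1 : ℝ) / (d₁ * d₂)) = 1 / d₁ by field_simp; try ring,
    show (d₁ : ℝ) * ((1 : ℝ) / (d₁ * d₂)) = 1 / d₂ by field_simp; try ring]
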